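/- Let W be the ring of Witt vectors of a perfect field of characteristic p, and let A_t be the ring of power series ∑ aₙ tⁿ/n! with aₙ ∈ W such that |aₙ/n!| rⁿ → 0 for all 0 < r < 1 (a subring of K[[t]] where K = Frac(W)). If f ∈ A_t has constant term zero, then fⁿ ∈ n!·A_t for every n ≥ 1. -/

import Mathlib

/-!
STATEMENT 0. Here we take `W = W(𝔽_p) = ℤ_[p]`, `K = Frac(W) = ℚ_[p]` with its p-adic
absolute value.  `MemAt p f` says that the power series `f ∈ K⟦t⟧` lies in the subring
`A_t = { ∑ aₙ tⁿ/n! : aₙ ∈ W, |aₙ/n!| rⁿ → 0 for all 0 < r < 1 }`, i.e. the coefficients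
`aₙ = n! · coeff n f` lie in `W` and the stated decay holds.  The theorem: if `f ∈ A_t`
has constant term zero, then `fⁿ ∈ n! · A_t` for every `n ≥ 1`.
-/

open PowerSeries Filter Nat

def MemAt (p : ℕ) [Fact p.Prime] (f : PowerSeries ℚ_[p]) : Prop :=
  (∀ n : ℕ, ‖(n ! : ℚ_[p]) * PowerSeries.coeff n f‖ ≤ 1) ∧
  ∀ r : ℝ, 0 < r → r < 1 →
    Tendsto (fun n : ℕ => ‖PowerSeries.coeff n f‖ * r ^ n) atTop (nhds 0)

lemma norm_natCast_le_one (p : ℕ) [Fact p.Prime] (n : ℕ) : ‖(n : ℚ_[p])‖ ≤ 1 := by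
  simpa using Padic.norm_int_le_one (p := p) (n : ℤ)

/-- The key arithmetic estimate, by induction on `n` using the formal derivative. -/
lemma key (p : ℕ) [Fact p.Prime] (f : PowerSeries ℚ_[p])
    (hf1 : ∀ m : ℕ, ‖(m ! : ℚ_[p]) * PowerSeries.coeff m f‖ ≤ 1)
    (h0 : PowerSeries.coeff 0 f = 0) :
    ∀ n m : ℕ, ‖(m ! : ℚ_[p]) * PowerSeries.coeff m (f ^ n)‖ ≤ ‖(n ! : ℚ_[p])‖ := by
  intro n
  induction n with
  | zero =>
    intro m
    simp only [pow_zero, Nat.factorial_zero, Nat.cast_one, norm_one]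
    rcases Nat.eq_zero_or_pos m with rfl | hm
    · simp
    · rw [PowerSeries.coeff_one, if_neg (by omega)]
      simp
  | succ n IH =>
    intro m
    rcases Nat.eq_zero_or_pos m with rfl | hm
    · have : PowerSeries.coeff 0 (f ^ (n + 1)) = (PowerSeries.coeff 0 f) ^ (n + 1) := by
        simp only [PowerSeries.coeff_zero_eq_constantCoeff, map_pow]
      rw [this, h0, zero_pow (by omega), mul_zero, norm_zero]
      exact norm_nonneg _
    · obtain ⟨m', rfl⟩ : ∃ m', m = m' + 1 := ⟨m - 1, by omega⟩
      -- derivative identity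
      have hder : PowerSeries.coeff (m' + 1) (f ^ (n + 1)) * (m' + 1)
          = ((n : ℚ_[p]) + 1) * PowerSeries.coeff m' (f ^ n * (d⁄dX ℚ_[p]) f) := by
        have h1 : (d⁄dX ℚ_[p]) (f ^ (n + 1)) = (n + 1) • (f ^ n • (d⁄dX ℚ_[p]) f) := by
          simpa using Derivation.leibniz_pow (d⁄dX ℚ_[p]) (a := f) (n + 1)
        rw [smul_eq_mul] at h1
        have h2 := congrArg (PowerSeries.coeff m') h1
        rw [PowerSeries.coeff_derivative] at h2
        rw [h2, map_nsmul, nsmul_eq_mul]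
        push_cast
        ring
      -- bound the coefficient of the product
      have hmul : ‖(m' ! : ℚ_[p]) * PowerSeries.coeff m' (f ^ n * (d⁄dX ℚ_[p]) f)‖
          ≤ ‖(n ! : ℚ_[p])‖ := by
        rw [PowerSeries.coeff_mul, Finset.mul_sum]
        refine IsUltrametricDist.norm_sum_le_of_forall_le_of_nonneg (norm_nonneg _) ?_
        rintro ⟨i, j⟩ hq
        have hij : i + j = m' := Finset.HasAntidiagonal.mem_antidiagonal.mp hq
        have hfac : (m' ! : ℚ_[p]) = (Nat.choose m' j : ℚ_[p]) * (i ! : ℚ_[p]) * (j ! : ℚ_[p]) := by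
          rw [← hij]
          exact_mod_cast (Nat.add_choose_mul_factorial_mul_factorial i j).symm
        have he : (m' ! : ℚ_[p]) * (PowerSeries.coeff i (f ^ n)
              * PowerSeries.coeff j ((d⁄dX ℚ_[p]) f))
            = (Nat.choose m' j : ℚ_[p])
              * ((i ! : ℚ_[p]) * PowerSeries.coeff i (f ^ n))
              * (((j + 1)! : ℚ_[p]) * PowerSeries.coeff (j + 1) f) := by
          rw [PowerSeries.coeff_derivative, hfac, Nat.factorial_succ]
          push_cast
          ring
        rw [he]
        calc ‖(Nat.choose m' j : ℚ_[p])
              * ((i ! : ℚ_[p]) * PowerSeries.coeff i (f ^ n))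
              * (((j + 1)! : ℚ_[p]) * PowerSeries.coeff (j + 1) f)‖
            = ‖(Nat.choose m' j : ℚ_[p])‖
              * ‖(i ! : ℚ_[p]) * PowerSeries.coeff i (f ^ n)‖
              * ‖((j + 1)! : ℚ_[p]) * PowerSeries.coeff (j + 1) f‖ := by
              rw [norm_mul, norm_mul]
          _ ≤ 1 * ‖(n ! : ℚ_[p])‖ * 1 := by
              refine mul_le_mul (mul_le_mul (norm_natCast_le_one p _) (IH i)
                (norm_nonneg _) zero_le_one) (hf1 (j + 1)) (norm_nonneg _) (by positivity)
          _ = ‖(n ! : ℚ_[p])‖ := by ring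
      -- assemble
      have heq : ((m' + 1)! : ℚ_[p]) * PowerSeries.coeff (m' + 1) (f ^ (n + 1))
          = ((n : ℚ_[p]) + 1)
            * ((m' ! : ℚ_[p]) * PowerSeries.coeff m' (f ^ n * (d⁄dX ℚ_[p]) f)) := by
        rw [Nat.factorial_succ]
        push_cast
        calc ((m' : ℚ_[p]) + 1) * (m' ! : ℚ_[p]) * PowerSeries.coeff (m' + 1) (f ^ (n + 1))
            = (m' ! : ℚ_[p]) * (PowerSeries.coeff (m' + 1) (f ^ (n + 1))
                * ((m' : ℚ_[p]) + 1)) := by ring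
          _ = (m' ! : ℚ_[p]) * (((n : ℚ_[p]) + 1)
                * PowerSeries.coeff m' (f ^ n * (d⁄dX ℚ_[p]) f)) := by
              rw [hder]
          _ = _ := by ring
      have hfacs : ((n + 1)! : ℚ_[p]) = ((n : ℚ_[p]) + 1) * (n ! : ℚ_[p]) := by
        rw [Nat.factorial_succ]; push_cast; ring
      rw [heq, hfacs]
      calc ‖((n : ℚ_[p]) + 1)
            * ((m' ! : ℚ_[p]) * PowerSeries.coeff m' (f ^ n * (d⁄dX ℚ_[p]) f))‖
          = ‖((n : ℚ_[p]) + 1)‖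
            * ‖(m' ! : ℚ_[p]) * PowerSeries.coeff m' (f ^ n * (d⁄dX ℚ_[p]) f)‖ :=
            norm_mul _ _
        _ ≤ ‖((n : ℚ_[p]) + 1)‖ * ‖(n ! : ℚ_[p])‖ :=
            mul_le_mul_of_nonneg_left hmul (norm_nonneg _)
        _ = ‖((n : ℚ_[p]) + 1) * (n ! : ℚ_[p])‖ := (norm_mul _ _).symm

/-- The decay condition is preserved under multiplication of power series. -/
lemma decay_mul (p : ℕ) [Fact p.Prime] (f g : PowerSeries ℚ_[p])
    (hf : ∀ r : ℝ, 0 < r → r < 1 →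
      Tendsto (fun n : ℕ => ‖PowerSeries.coeff n f‖ * r ^ n) atTop (nhds 0))
    (hg : ∀ r : ℝ, 0 < r → r < 1 →
      Tendsto (fun n : ℕ => ‖PowerSeries.coeff n g‖ * r ^ n) atTop (nhds 0)) :
    ∀ r : ℝ, 0 < r → r < 1 →
      Tendsto (fun n : ℕ => ‖PowerSeries.coeff n (f * g)‖ * r ^ n) atTop (nhds 0) := by
  intro r hr hr1
  obtain ⟨s, hrs, hs1⟩ : ∃ s : ℝ, r < s ∧ s < 1 := ⟨(r + 1) / 2, by linarith, by linarith⟩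
  have hs0 : 0 < s := lt_trans hr hrs
  -- boundedness of the coefficient sequences at radius s
  obtain ⟨Mf, hMf⟩ := ((hf s hs0 hs1).bddAbove_range).exists_ge 0
  obtain ⟨Mg, hMg⟩ := ((hg s hs0 hs1).bddAbove_range).exists_ge 0
  have hMf0 : 0 ≤ Mf := hMf.1
  have hMg0 : 0 ≤ Mg := hMg.1
  have hbf : ∀ n : ℕ, ‖PowerSeries.coeff n f‖ * s ^ n ≤ Mf := by
    intro n; exact hMf.2 _ ⟨n, rfl⟩
  have hbg : ∀ n : ℕ, ‖PowerSeries.coeff n g‖ * s ^ n ≤ Mg := by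
    intro n; exact hMg.2 _ ⟨n, rfl⟩
  -- bound on the product coefficients
  have hbound : ∀ n : ℕ, ‖PowerSeries.coeff n (f * g)‖ * r ^ n
      ≤ Mf * Mg * (r / s) ^ n := by
    intro n
    have h1 : ‖PowerSeries.coeff n (f * g)‖ * s ^ n ≤ Mf * Mg := by
      rw [PowerSeries.coeff_mul]
      have h2 : ‖∑ q ∈ Finset.HasAntidiagonal.antidiagonal n,
          PowerSeries.coeff q.1 f * PowerSeries.coeff q.2 g‖
          ≤ Mf * Mg / s ^ n := by
        refine IsUltrametricDist.norm_sum_le_of_forall_le_of_nonneg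
          (by positivity) ?_
        rintro ⟨i, j⟩ hq
        have hij : i + j = n := Finset.HasAntidiagonal.mem_antidiagonal.mp hq
        rw [norm_mul]
        have hi : ‖PowerSeries.coeff i f‖ ≤ Mf / s ^ i := by
          rw [le_div_iff₀ (by positivity)]; exact hbf i
        have hj : ‖PowerSeries.coeff j g‖ ≤ Mg / s ^ j := by
          rw [le_div_iff₀ (by positivity)]; exact hbg j
        calc ‖PowerSeries.coeff i f‖ * ‖PowerSeries.coeff j g‖
            ≤ (Mf / s ^ i) * (Mg / s ^ j) := by
              exact mul_le_mul hi hj (norm_nonneg _) (by positivity)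
          _ = Mf * Mg / s ^ n := by
              rw [← hij, pow_add]; field_simp
      calc ‖∑ q ∈ Finset.HasAntidiagonal.antidiagonal n,
            PowerSeries.coeff q.1 f * PowerSeries.coeff q.2 g‖ * s ^ n
          ≤ (Mf * Mg / s ^ n) * s ^ n := by
            exact mul_le_mul_of_nonneg_right h2 (by positivity)
        _ = Mf * Mg := by field_simp
    calc ‖PowerSeries.coeff n (f * g)‖ * r ^ n
        = (‖PowerSeries.coeff n (f * g)‖ * s ^ n) * (r / s) ^ n := by
          rw [div_pow]; field_simp
      _ ≤ Mf * Mg * (r / s) ^ n := by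
          refine mul_le_mul_of_nonneg_right h1 (by positivity)
  have hgeo : Tendsto (fun n : ℕ => Mf * Mg * (r / s) ^ n) atTop (nhds 0) := by
    have := tendsto_pow_atTop_nhds_zero_of_lt_one
      (le_of_lt (by positivity : (0:ℝ) < r / s)) ((div_lt_one hs0).mpr hrs)
    simpa using this.const_mul (Mf * Mg)
  exact squeeze_zero (fun n => by positivity) hbound hgeo

lemma decay_pow (p : ℕ) [Fact p.Prime] (f : PowerSeries ℚ_[p])
    (hf : ∀ r : ℝ, 0 < r → r < 1 →
      Tendsto (fun n : ℕ => ‖PowerSeries.coeff n f‖ * r ^ n) atTop (nhds 0)) (n : ℕ) :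
    ∀ r : ℝ, 0 < r → r < 1 →
      Tendsto (fun m : ℕ => ‖PowerSeries.coeff m (f ^ n)‖ * r ^ m) atTop (nhds 0) := by
  induction n with
  | zero =>
    intro r hr hr1
    rw [pow_zero]
    have h : (fun _ : ℕ => (0 : ℝ)) =ᶠ[atTop]
        fun m : ℕ => ‖PowerSeries.coeff m (1 : PowerSeries ℚ_[p])‖ * r ^ m := by
      filter_upwards [eventually_ge_atTop 1] with m hm
      rw [PowerSeries.coeff_one, if_neg (by omega)]
      simp
    exact Tendsto.congr' h tendsto_const_nhds
  | succ k IH =>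
    rw [pow_succ]
    exact decay_mul p _ f IH hf

theorem stmt0 (p : ℕ) [Fact p.Prime] (f : PowerSeries ℚ_[p])
    (hf : MemAt p f) (h0 : PowerSeries.coeff 0 f = 0)
    (n : ℕ) (hn : 1 ≤ n) :
    ∃ g : PowerSeries ℚ_[p], MemAt p g ∧ f ^ n = (n ! : ℚ_[p]) • g := by
  have hne : ((n ! : ℚ_[p])) ≠ 0 := by
    exact_mod_cast Nat.cast_ne_zero.mpr (Nat.factorial_ne_zero n)
  refine ⟨((n ! : ℚ_[p]))⁻¹ • f ^ n, ⟨?_, ?_⟩, ?_⟩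
  · intro m
    have hc : PowerSeries.coeff m (((n ! : ℚ_[p]))⁻¹ • f ^ n)
        = ((n ! : ℚ_[p]))⁻¹ * PowerSeries.coeff m (f ^ n) := by
      rw [map_smul, smul_eq_mul]
    rw [hc]
    have := key p f hf.1 h0 n m
    rw [show (m ! : ℚ_[p]) * (((n ! : ℚ_[p]))⁻¹ * PowerSeries.coeff m (f ^ n))
        = ((n ! : ℚ_[p]))⁻¹ * ((m ! : ℚ_[p]) * PowerSeries.coeff m (f ^ n)) by ring]
    rw [norm_mul, norm_inv]
    have hpos : (0:ℝ) < ‖(n ! : ℚ_[p])‖ := norm_pos_iff.mpr hne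
    calc ‖(n ! : ℚ_[p])‖⁻¹ * ‖(m ! : ℚ_[p]) * PowerSeries.coeff m (f ^ n)‖
        ≤ ‖(n ! : ℚ_[p])‖⁻¹ * ‖(n ! : ℚ_[p])‖ :=
          mul_le_mul_of_nonneg_left this (inv_nonneg.mpr (norm_nonneg _))
      _ = 1 := inv_mul_cancel₀ (ne_of_gt hpos)
  · intro r hr hr1
    have hdec := decay_pow p f hf.2 n r hr hr1
    have hc : ∀ m : ℕ, ‖PowerSeries.coeff m (((n ! : ℚ_[p]))⁻¹ • f ^ n)‖ * r ^ m
        = ‖((n ! : ℚ_[p]))⁻¹‖ * (‖PowerSeries.coeff m (f ^ n)‖ * r ^ m) := by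
      intro m
      rw [map_smul, smul_eq_mul, norm_mul]
      ring
    simp only [hc]
    simpa using hdec.const_mul (‖((n ! : ℚ_[p]))⁻¹‖)
  · rw [smul_smul, mul_inv_cancel₀ hne, one_smul]
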